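/- Let p be an n×n real matrix with nonnegative entries and let γ ∈ [−1,1]. The fractional free energy F_f^γ(·|p) is convex on the β-polytope 𝓑_p of p: for all β₁, β₂ ∈ 𝓑_p and all t ∈ [0,1], F_f^γ(t·β₁ + (1−t)·β₂ | p) ≤ t·F_f^γ(β₁|p) + (1−t)·F_f^γ(β₂|p). -/

import Mathlib

open scoped BigOperators

/-- The permanent of an `n × n` real matrix. -/
noncomputable def permanent {n : ℕ} (p : Matrix (Fin n) (Fin n) ℝ) : ℝ :=
  ∑ σ : Equiv.Perm (Fin n), ∏ i, p i (σ i)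

/-- A matrix is doubly stochastic: nonnegative entries, all row and column sums equal 1. -/
def DoublyStochastic {n : ℕ} (β : Matrix (Fin n) (Fin n) ℝ) : Prop :=
  (∀ i j, 0 ≤ β i j) ∧ (∀ i, ∑ j, β i j = 1) ∧ (∀ j, ∑ i, β i j = 1)

/-- Membership in the β-polytope `𝓑_p` of `p`. -/
def InPolytope {n : ℕ} (p β : Matrix (Fin n) (Fin n) ℝ) : Prop :=
  DoublyStochastic β ∧ ∀ i j, p i j = 0 → β i j = 0

/-- Membership in the interior of the β-polytope of `p`. -/
def InInterior {n : ℕ} (p β : Matrix (Fin n) (Fin n) ℝ) : Prop :=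
  InPolytope p β ∧ ∀ i j, 0 < p i j → 0 < β i j ∧ β i j < 1

/-- Bethe free energy `F_BP(β|p)` (sum over entries with `p i j > 0`;
the convention `0 * log 0 = 0` holds since `Real.log 0 = 0`). -/
noncomputable def FBP {n : ℕ} (p β : Matrix (Fin n) (Fin n) ℝ) : ℝ :=
  ∑ i, ∑ j, if 0 < p i j then
    β i j * Real.log (β i j / p i j) - (1 - β i j) * Real.log (1 - β i j)
  else 0

/-- Mean-field free energy `F_MF(β|p)`. -/
noncomputable def FMF {n : ℕ} (p β : Matrix (Fin n) (Fin n) ℝ) : ℝ :=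
  ∑ i, ∑ j, if 0 < p i j then
    β i j * Real.log (β i j / p i j) + (1 - β i j) * Real.log (1 - β i j)
  else 0

/-- Fractional free energy `F_f^γ(β|p)`. -/
noncomputable def Ff {n : ℕ} (γ : ℝ) (p β : Matrix (Fin n) (Fin n) ℝ) : ℝ :=
  ∑ i, ∑ j, if 0 < p i j then
    β i j * Real.log (β i j / p i j) + γ * ((1 - β i j) * Real.log (1 - β i j))
  else 0

/-- Optimal fractional partition function `Z_of^γ(p) = exp(-min_{β ∈ 𝓑_p} F_f^γ(β|p))`
(the minimum is expressed as an infimum; it is attained since `𝓑_p` is nonempty and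
compact when `permanent p > 0` and `F_f^γ(·|p)` is continuous on it). -/
noncomputable def Zof {n : ℕ} (γ : ℝ) (p : Matrix (Fin n) (Fin n) ℝ) : ℝ :=
  Real.exp (-(sInf ((fun β => Ff γ p β) '' {β | InPolytope p β})))


open Finset

lemma key2 {m : ℕ} (x v : Fin m → ℝ)
    (hx0 : ∀ k, 0 ≤ x k) (hx1 : ∀ k, x k ≤ 1)
    (hsx : ∑ k, x k = 1) (hsv : ∑ k, v k = 0)
    (h0 : ∀ k, x k = 0 → v k = 0) :
    ∑ k, (v k) ^ 2 / (1 - x k) ≤ ∑ k, (v k) ^ 2 / x k := by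
  by_cases hbig : ∀ k, x k ≤ 1 / 2
  · refine Finset.sum_le_sum fun k _ => ?_
    by_cases hv : v k = 0
    · simp [hv]
    · have hxk : 0 < x k := (hx0 k).lt_of_ne fun h => hv (h0 k h.symm)
      exact div_le_div_of_nonneg_left (sq_nonneg _) hxk (by linarith [hbig k])
  · push_neg at hbig
    obtain ⟨i, hi⟩ := hbig
    have hxk : ∀ k, k ≠ i → x k ≤ 1 - x i := by
      intro k hk
      have h₁ : x k ≤ ∑ j ∈ univ.erase i, x j :=
        Finset.single_le_sum (fun j _ => hx0 j) (Finset.mem_erase.2 ⟨hk, mem_univ k⟩)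
      have h₂ : x i + ∑ j ∈ univ.erase i, x j = 1 := by
        rw [Finset.add_sum_erase _ _ (mem_univ i), hsx]
      linarith
    by_cases hx1i : x i = 1
    · have hz : ∀ k, v k = 0 := by
        have hzk : ∀ k, k ≠ i → v k = 0 := by
          intro k hk
          exact h0 k (le_antisymm (by have := hxk k hk; linarith) (hx0 k))
      -- v i = 0 from sum
        intro k
        by_cases hk : k = i
        · subst hk
          have : ∑ j ∈ univ.erase k, v j = 0 :=
            Finset.sum_eq_zero fun j hj => hzk j (Finset.mem_erase.1 hj).1
          have h₂ : v k + ∑ j ∈ univ.erase k, v j = 0 := by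
            rw [Finset.add_sum_erase _ _ (mem_univ k), hsv]
          linarith
        · exact hzk k hk
      simp [hz]
    · have hxi1 : x i < 1 := lt_of_le_of_ne (hx1 i) hx1i
      have hxi0 : 0 < x i := by linarith
      set s : ℝ := 1 - x i with hs
      have hs0 : 0 < s := by simp only [hs]; linarith
      have hs2 : s < 1 / 2 := by simp only [hs]; linarith
      rw [← sub_nonneg, ← Finset.sum_sub_distrib,
        ← Finset.add_sum_erase _ _ (mem_univ i)]
      set F := (univ.erase i).filter (fun k => v k ≠ 0) with hF
      have hFmem : ∀ k ∈ F, v k ≠ 0 ∧ 0 < x k ∧ x k ≤ s ∧ x k < 1 / 2 := by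
        intro k hk
        obtain ⟨hk1, hk2⟩ := Finset.mem_filter.1 hk
        have hki : k ≠ i := (Finset.mem_erase.1 hk1).1
        have hxk' : x k ≤ s := hxk k hki
        have hxkpos : 0 < x k := (hx0 k).lt_of_ne fun h => hk2 (h0 k h.symm)
        exact ⟨hk2, hxkpos, hxk', lt_of_le_of_lt hxk' hs2⟩
      set w : Fin m → ℝ := fun k => x k * (1 - x k) / (1 - 2 * x k) with hw
      have hwpos : ∀ k ∈ F, 0 < w k := by
        intro k hk
        obtain ⟨_, hxp, _, hxh⟩ := hFmem k hk
        exact div_pos (mul_pos hxp (by linarith)) (by linarith)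
      have hrest : ∑ k ∈ univ.erase i, ((v k) ^ 2 / x k - (v k) ^ 2 / (1 - x k))
          = ∑ k ∈ F, ((v k) ^ 2 / x k - (v k) ^ 2 / (1 - x k)) := by
        rw [hF]
        refine (Finset.sum_filter_of_ne ?_).symm
        intro k _ hne
        rcases eq_or_ne (v k) 0 with h | h
        · exact absurd (by simp [h]) hne
        · exact h
      have hterm : ∀ k ∈ F, (v k) ^ 2 / x k - (v k) ^ 2 / (1 - x k) = (v k) ^ 2 / w k := by
        intro k hk
        obtain ⟨_, hxp, _, hxh⟩ := hFmem k hk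
        have h1 : x k ≠ 0 := hxp.ne'
        have h2 : (1 : ℝ) - x k ≠ 0 := by linarith
        have h3 : (1 : ℝ) - 2 * x k ≠ 0 := by linarith
        rw [hw]
        field_simp
        ring
      -- v i = - sum over F
      have hvi : v i = -∑ k ∈ F, v k := by
        have h₂ : v i + ∑ j ∈ univ.erase i, v j = 0 := by
          rw [Finset.add_sum_erase _ _ (mem_univ i), hsv]
        have h₃ : ∑ j ∈ univ.erase i, v j = ∑ k ∈ F, v k := by
          rw [hF]
          exact (Finset.sum_filter_of_ne (by intro k _ hne; exact hne)).symm
        linarith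
      -- Cauchy-Schwarz
      have hCS : (∑ k ∈ F, v k) ^ 2 ≤ (∑ k ∈ F, w k) * ∑ k ∈ F, (v k) ^ 2 / w k := by
        have := Finset.sum_mul_sq_le_sq_mul_sq F (fun k => Real.sqrt (w k))
          (fun k => v k / Real.sqrt (w k))
        have he1 : ∑ k ∈ F, Real.sqrt (w k) * (v k / Real.sqrt (w k)) = ∑ k ∈ F, v k := by
          refine Finset.sum_congr rfl fun k hk => ?_
          have : Real.sqrt (w k) ≠ 0 := (Real.sqrt_pos.2 (hwpos k hk)).ne'
          rw [mul_comm, div_mul_cancel₀ _ this]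
        have he2 : ∑ k ∈ F, Real.sqrt (w k) ^ 2 = ∑ k ∈ F, w k := by
          refine Finset.sum_congr rfl fun k hk => ?_
          exact Real.sq_sqrt (hwpos k hk).le
        have he3 : ∑ k ∈ F, (v k / Real.sqrt (w k)) ^ 2 = ∑ k ∈ F, (v k) ^ 2 / w k := by
          refine Finset.sum_congr rfl fun k hk => ?_
          rw [div_pow, Real.sq_sqrt (hwpos k hk).le]
        rw [he1, he2, he3] at this
        exact this
      have hsumvw_nonneg : 0 ≤ ∑ k ∈ F, (v k) ^ 2 / w k :=
        Finset.sum_nonneg fun k hk => div_nonneg (sq_nonneg _) (hwpos k hk).le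
      set W : ℝ := s * x i / (2 * x i - 1) with hWdef
      have hWpos : 0 < W := div_pos (mul_pos hs0 hxi0) (by linarith)
      have hsumw : ∑ k ∈ F, w k ≤ W := by
        have step : ∀ k ∈ F, w k ≤ x k * (x i / (2 * x i - 1)) := by
          intro k hk
          obtain ⟨_, hxp, hxs, hxh⟩ := hFmem k hk
          have hp1 : (0:ℝ) < 1 - 2 * x k := by linarith
          have hp2 : (0:ℝ) < 2 * x i - 1 := by linarith
          have hB : x k * (x i / (2 * x i - 1)) * (1 - 2 * x k)
              = x k * x i * (1 - 2 * x k) / (2 * x i - 1) := by ring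
          rw [hw, div_le_iff₀ hp1, hB, le_div_iff₀ hp2]
          have hxs' : (0:ℝ) ≤ 1 - x i - x k := by
            have : x k ≤ s := hxs
            simp only [hs] at this
            linarith
          nlinarith [mul_nonneg hxp.le hxs']
        calc ∑ k ∈ F, w k ≤ ∑ k ∈ F, x k * (x i / (2 * x i - 1)) := Finset.sum_le_sum step
          _ = (∑ k ∈ F, x k) * (x i / (2 * x i - 1)) := by rw [← Finset.sum_mul]
          _ ≤ s * (x i / (2 * x i - 1)) := by
              refine mul_le_mul_of_nonneg_right ?_ (div_nonneg hxi0.le (by linarith))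
              have h₁ : ∑ k ∈ F, x k ≤ ∑ k ∈ univ.erase i, x k := by
                refine Finset.sum_le_sum_of_subset_of_nonneg (Finset.filter_subset _ _) ?_
                intro k _ _; exact hx0 k
              have h₂ : x i + ∑ j ∈ univ.erase i, x j = 1 := by
                rw [Finset.add_sum_erase _ _ (mem_univ i), hsx]
              simp only [hs]; linarith
          _ = W := by rw [hWdef]; ring
      have hfinal : (v i) ^ 2 / W ≤ ∑ k ∈ F, (v k) ^ 2 / w k := by
        rw [div_le_iff₀ hWpos]
        have : (v i) ^ 2 = (∑ k ∈ F, v k) ^ 2 := by rw [hvi, neg_sq]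
        rw [this]
        calc (∑ k ∈ F, v k) ^ 2 ≤ (∑ k ∈ F, w k) * ∑ k ∈ F, (v k) ^ 2 / w k := hCS
          _ ≤ W * ∑ k ∈ F, (v k) ^ 2 / w k := mul_le_mul_of_nonneg_right hsumw hsumvw_nonneg
          _ = (∑ k ∈ F, (v k) ^ 2 / w k) * W := by ring
      have hWs : (v i) ^ 2 / W = (v i) ^ 2 / s - (v i) ^ 2 / x i := by
        rw [hWdef]
        have h1s : (1:ℝ) - x i = s := by rw [hs]
        field_simp
        ring
      rw [hrest, Finset.sum_congr rfl hterm]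
      have hfin2 : (v i) ^ 2 / s - (v i) ^ 2 / x i ≤ ∑ k ∈ F, (v k) ^ 2 / w k := by
        rw [← hWs]; exact hfinal
      have hsi : (1:ℝ) - x i = s := by rw [hs]
      rw [hsi]
      linarith

lemma keyQ {m : ℕ} (γ : ℝ) (hγ : -1 ≤ γ) (x v : Fin m → ℝ)
    (hx0 : ∀ k, 0 ≤ x k) (hx1 : ∀ k, x k ≤ 1)
    (hsx : ∑ k, x k = 1) (hsv : ∑ k, v k = 0)
    (h0 : ∀ k, x k = 0 → v k = 0) :
    0 ≤ ∑ k, ((v k) ^ 2 / x k + γ * ((v k) ^ 2 / (1 - x k))) := by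
  have h2 := key2 x v hx0 hx1 hsx hsv h0
  have h3 : ∑ k, ((v k) ^ 2 / x k - (v k) ^ 2 / (1 - x k))
      ≤ ∑ k, ((v k) ^ 2 / x k + γ * ((v k) ^ 2 / (1 - x k))) := by
    refine Finset.sum_le_sum fun k _ => ?_
    have hd : 0 ≤ (v k) ^ 2 / (1 - x k) := div_nonneg (sq_nonneg _) (by linarith [hx1 k])
    nlinarith
  rw [Finset.sum_sub_distrib] at h3
  linarith


lemma combo_pos {a b u : ℝ} (ha : 0 ≤ a) (hb : 0 ≤ b) (hu : 0 < u) (hu1 : u < 1)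
    (hne : a ≠ b) : 0 < a + u * (b - a) := by
  rcases ha.lt_or_eq with h | h
  · nlinarith
  · have hb' : 0 < b := hb.lt_of_ne fun hh => hne (by rw [← h, ← hh])
    nlinarith

lemma entry_d1 (q γ a c u : ℝ) (h : c = 0 ∨ (0 < a + u * c ∧ a + u * c < 1)) :
    HasDerivAt (fun y : ℝ => (a + y * c) * Real.log (a + y * c)
        - (a + y * c) * Real.log q
        + γ * ((1 - (a + y * c)) * Real.log (1 - (a + y * c))))
      (c * (Real.log (a + u * c) + 1) - c * Real.log q
        + γ * (-c * (Real.log (1 - (a + u * c)) + 1))) u := by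
  rcases h with hc | ⟨h1, h2⟩
  · subst hc
    simp only [mul_zero, add_zero, zero_mul, neg_zero, zero_sub, sub_zero, zero_add,
      mul_neg, neg_mul]
    exact hasDerivAt_const _ _
  · have hξ : HasDerivAt (fun y : ℝ => a + y * c) c u := by
      simpa using ((hasDerivAt_id u).mul_const c).const_add a
    have h₁ : HasDerivAt (fun y : ℝ => (a + y * c) * Real.log (a + y * c))
        ((Real.log (a + u * c) + 1) * c) u :=
      by have := (Real.hasDerivAt_mul_log h1.ne').comp u hξ; exact this
    have h₂ : HasDerivAt (fun y : ℝ => (a + y * c) * Real.log q) (c * Real.log q) u :=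
      hξ.mul_const _
    have hξ' : HasDerivAt (fun y : ℝ => 1 - (a + y * c)) (-c) u := hξ.const_sub 1
    have hne2 : (1 : ℝ) - (a + u * c) ≠ 0 := by linarith
    have h₃ : HasDerivAt (fun y : ℝ => (1 - (a + y * c)) * Real.log (1 - (a + y * c)))
        ((Real.log (1 - (a + u * c)) + 1) * (-c)) u :=
      by have := (Real.hasDerivAt_mul_log hne2).comp u hξ'; exact this
    have hall := (h₁.fun_sub h₂).fun_add (h₃.const_mul γ)
    refine hall.congr_deriv ?_
    ring

lemma entry_d2 (q γ a c u : ℝ) (h : c = 0 ∨ (0 < a + u * c ∧ a + u * c < 1)) :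
    HasDerivAt (fun y : ℝ => c * (Real.log (a + y * c) + 1) - c * Real.log q
        + γ * (-c * (Real.log (1 - (a + y * c)) + 1)))
      (c ^ 2 / (a + u * c) + γ * (c ^ 2 / (1 - (a + u * c)))) u := by
  rcases h with hc | ⟨h1, h2⟩
  · subst hc
    simp only [zero_mul, neg_zero, zero_sub, sub_zero, zero_add, mul_zero, zero_div,
      ne_eq, OfNat.ofNat_ne_zero, not_false_eq_true, zero_pow, add_zero, sub_self, mul_neg]
    exact hasDerivAt_const _ _
  · have hξ : HasDerivAt (fun y : ℝ => a + y * c) c u := by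
      simpa using ((hasDerivAt_id u).mul_const c).const_add a
    have hlog : HasDerivAt (fun y : ℝ => Real.log (a + y * c)) ((a + u * c)⁻¹ * c) u :=
      by have := (Real.hasDerivAt_log h1.ne').comp u hξ; exact this
    have h₁ : HasDerivAt (fun y : ℝ => c * (Real.log (a + y * c) + 1))
        (c * ((a + u * c)⁻¹ * c)) u := (hlog.add_const 1).const_mul c
    have hξ' : HasDerivAt (fun y : ℝ => 1 - (a + y * c)) (-c) u := hξ.const_sub 1
    have hne2 : (1 : ℝ) - (a + u * c) ≠ 0 := by linarith
    have hlog2 : HasDerivAt (fun y : ℝ => Real.log (1 - (a + y * c)))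
        ((1 - (a + u * c))⁻¹ * (-c)) u := by have := (Real.hasDerivAt_log hne2).comp u hξ'; exact this
    have h₃ : HasDerivAt (fun y : ℝ => γ * (-c * (Real.log (1 - (a + y * c)) + 1)))
        (γ * (-c * ((1 - (a + u * c))⁻¹ * (-c)))) u :=
      (((hlog2.add_const 1).const_mul (-c)).const_mul γ)
    have hall := (h₁.sub_const (c * Real.log q)).fun_add h₃
    refine hall.congr_deriv ?_
    have hx : a + u * c ≠ 0 := h1.ne'
    field_simp

lemma entry_rewrite {X q : ℝ} (hX : 0 ≤ X) (hq : 0 < q) :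
    X * Real.log (X / q) = X * Real.log X - X * Real.log q := by
  rcases hX.lt_or_eq with h | h
  · rw [Real.log_div h.ne' hq.ne']; ring
  · simp [← h]


theorem Ff_convexOn {n : ℕ} (γ : ℝ) (hγ : γ ∈ Set.Icc (-1 : ℝ) 1)
    (p : Matrix (Fin n) (Fin n) ℝ) (hp : ∀ i j, 0 ≤ p i j) :
    ∀ β₁ β₂ : Matrix (Fin n) (Fin n) ℝ, InPolytope p β₁ → InPolytope p β₂ →
      ∀ t : ℝ, 0 ≤ t → t ≤ 1 →
        Ff γ p (t • β₁ + (1 - t) • β₂) ≤ t * Ff γ p β₁ + (1 - t) * Ff γ p β₂ := by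
  intro β₁ β₂ hB1 hB2 t ht0 ht1
  obtain ⟨⟨h10, h1row, h1col⟩, h1p⟩ := hB1
  obtain ⟨⟨h20, h2row, h2col⟩, h2p⟩ := hB2
  have h1le : ∀ i j, β₁ i j ≤ 1 := by
    intro i j
    have h := Finset.single_le_sum (fun k _ => h10 i k) (mem_univ j)
    rw [h1row i] at h; exact h
  have h2le : ∀ i j, β₂ i j ≤ 1 := by
    intro i j
    have h := Finset.single_le_sum (fun k _ => h20 i k) (mem_univ j)
    rw [h2row i] at h; exact h
  have hzero : ∀ i j, ¬ 0 < p i j → β₁ i j = 0 ∧ β₂ i j = 0 := by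
    intro i j h
    have hpz : p i j = 0 := le_antisymm (not_lt.1 h) (hp i j)
    exact ⟨h1p i j hpz, h2p i j hpz⟩
  set φ : ℝ → ℝ := fun u => ∑ i, ∑ j, if 0 < p i j then
      (β₂ i j + u * (β₁ i j - β₂ i j)) * Real.log (β₂ i j + u * (β₁ i j - β₂ i j))
      - (β₂ i j + u * (β₁ i j - β₂ i j)) * Real.log (p i j)
      + γ * ((1 - (β₂ i j + u * (β₁ i j - β₂ i j)))
          * Real.log (1 - (β₂ i j + u * (β₁ i j - β₂ i j))))
    else 0 with hφ
  set φ1 : ℝ → ℝ := fun u => ∑ i, ∑ j, if 0 < p i j then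
      (β₁ i j - β₂ i j) * (Real.log (β₂ i j + u * (β₁ i j - β₂ i j)) + 1)
      - (β₁ i j - β₂ i j) * Real.log (p i j)
      + γ * (-(β₁ i j - β₂ i j)
          * (Real.log (1 - (β₂ i j + u * (β₁ i j - β₂ i j))) + 1))
    else 0 with hφ1
  set φ2 : ℝ → ℝ := fun u => ∑ i, ∑ j, if 0 < p i j then
      (β₁ i j - β₂ i j) ^ 2 / (β₂ i j + u * (β₁ i j - β₂ i j))
      + γ * ((β₁ i j - β₂ i j) ^ 2 / (1 - (β₂ i j + u * (β₁ i j - β₂ i j))))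
    else 0 with hφ2
  -- the safety condition for derivatives
  have hsafe : ∀ u ∈ Set.Ioo (0:ℝ) 1, ∀ i j,
      (β₁ i j - β₂ i j) = 0 ∨ (0 < β₂ i j + u * (β₁ i j - β₂ i j)
        ∧ β₂ i j + u * (β₁ i j - β₂ i j) < 1) := by
    intro u hu i j
    by_cases hc : β₁ i j - β₂ i j = 0
    · exact Or.inl hc
    · right
      have hne : β₂ i j ≠ β₁ i j := fun h => hc (by rw [h, sub_self])
      constructor
      · exact combo_pos (h20 i j) (h10 i j) hu.1 hu.2 hne
      · have h2 := combo_pos (a := 1 - β₂ i j) (b := 1 - β₁ i j)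
          (by linarith [h2le i j]) (by linarith [h1le i j]) hu.1 hu.2
          (fun h => hne (by linarith))
        nlinarith [h2]
  have hd1 : ∀ u ∈ Set.Ioo (0:ℝ) 1, HasDerivAt φ (φ1 u) u := by
    intro u hu
    rw [hφ]
    simp only [hφ1]
    refine HasDerivAt.fun_sum fun i _ => HasDerivAt.fun_sum fun j _ => ?_
    by_cases hq : 0 < p i j
    · simp only [if_pos hq]
      exact entry_d1 (p i j) γ (β₂ i j) (β₁ i j - β₂ i j) u (hsafe u hu i j)
    · simp only [if_neg hq]
      exact hasDerivAt_const _ _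
  have hd2 : ∀ u ∈ Set.Ioo (0:ℝ) 1, HasDerivAt φ1 (φ2 u) u := by
    intro u hu
    rw [hφ1]
    simp only [hφ2]
    refine HasDerivAt.fun_sum fun i _ => HasDerivAt.fun_sum fun j _ => ?_
    by_cases hq : 0 < p i j
    · simp only [if_pos hq]
      exact entry_d2 (p i j) γ (β₂ i j) (β₁ i j - β₂ i j) u (hsafe u hu i j)
    · simp only [if_neg hq]
      exact hasDerivAt_const _ _
  have hderiv1 : ∀ u ∈ Set.Ioo (0:ℝ) 1, deriv φ u = φ1 u := fun u hu => (hd1 u hu).deriv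
  have hev : ∀ u ∈ Set.Ioo (0:ℝ) 1, deriv φ =ᶠ[nhds u] φ1 := fun u hu =>
    Filter.eventuallyEq_of_mem (Ioo_mem_nhds hu.1 hu.2) hderiv1
  have hconv : ConvexOn ℝ (Set.Icc (0:ℝ) 1) φ := by
    apply convexOn_of_deriv2_nonneg (convex_Icc 0 1)
    · apply Continuous.continuousOn
      rw [hφ]
      refine continuous_finset_sum _ fun i _ => continuous_finset_sum _ fun j _ => ?_
      by_cases hq : 0 < p i j
      · simp only [if_pos hq]
        have hc : Continuous fun u : ℝ => β₂ i j + u * (β₁ i j - β₂ i j) := by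
          exact continuous_const.add (continuous_id.mul continuous_const)
        exact ((Real.continuous_mul_log.comp hc).sub (hc.mul continuous_const)).add
          (continuous_const.mul (Real.continuous_mul_log.comp (continuous_const.sub hc)))
      · simp only [if_neg hq]
        exact continuous_const
    · rw [interior_Icc]
      intro u hu
      exact ((hd1 u hu).differentiableAt).differentiableWithinAt
    · rw [interior_Icc]
      intro u hu
      exact (((hd2 u hu).differentiableAt).congr_of_eventuallyEq
        (hev u hu)).differentiableWithinAt
    · rw [interior_Icc]
      intro u hu
      have h2 : deriv (deriv φ) u = φ2 u := by
        rw [Filter.EventuallyEq.deriv_eq (hev u hu)]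
        exact (hd2 u hu).deriv
      have hit : deriv^[2] φ u = deriv (deriv φ) u := by
        simp [Function.iterate_succ, Function.iterate_zero, Function.comp]
      rw [hit, h2, hφ2]
      refine Finset.sum_nonneg fun i _ => ?_
      have hrow := keyQ γ hγ.1 (fun j => β₂ i j + u * (β₁ i j - β₂ i j))
        (fun j => β₁ i j - β₂ i j)
        (by
          intro k
          show 0 ≤ β₂ i k + u * (β₁ i k - β₂ i k)
          nlinarith [mul_nonneg (by linarith [hu.2] : (0:ℝ) ≤ 1 - u) (h20 i k),
            mul_nonneg hu.1.le (h10 i k)])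
        (by
          intro k
          show β₂ i k + u * (β₁ i k - β₂ i k) ≤ 1
          nlinarith [mul_nonneg (by linarith [hu.2] : (0:ℝ) ≤ 1 - u)
              (by linarith [h2le i k] : (0:ℝ) ≤ 1 - β₂ i k),
            mul_nonneg hu.1.le (by linarith [h1le i k] : (0:ℝ) ≤ 1 - β₁ i k)])
        (by
          have hsum : ∑ k, (β₂ i k + u * (β₁ i k - β₂ i k))
              = (∑ k, β₂ i k) + u * ((∑ k, β₁ i k) - (∑ k, β₂ i k)) := by
            rw [Finset.sum_add_distrib, ← Finset.mul_sum, Finset.sum_sub_distrib]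
          rw [hsum, h1row, h2row]; ring)
        (by
          rw [Finset.sum_sub_distrib, h1row, h2row]; ring)
        (by
          intro k hz
          have hz' : β₂ i k + u * (β₁ i k - β₂ i k) = 0 := hz
          have hprod : 0 ≤ (1 - u) * β₂ i k :=
            mul_nonneg (by linarith [hu.2]) (h20 i k)
          have hprod2 : 0 ≤ u * β₁ i k := mul_nonneg hu.1.le (h10 i k)
          have hb1 : β₁ i k = 0 := le_antisymm
            (by nlinarith [h10 i k, hu.1, hu.2]) (h10 i k)
          have hb2 : β₂ i k = 0 := le_antisymm
            (by nlinarith [h20 i k, hu.1, hu.2]) (h20 i k)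
          show β₁ i k - β₂ i k = 0
          rw [hb1, hb2, sub_zero])
      have hcongr : ∑ j, (if 0 < p i j then
          (β₁ i j - β₂ i j) ^ 2 / (β₂ i j + u * (β₁ i j - β₂ i j))
          + γ * ((β₁ i j - β₂ i j) ^ 2 / (1 - (β₂ i j + u * (β₁ i j - β₂ i j))))
        else 0)
          = ∑ j, ((β₁ i j - β₂ i j) ^ 2 / (β₂ i j + u * (β₁ i j - β₂ i j))
          + γ * ((β₁ i j - β₂ i j) ^ 2 / (1 - (β₂ i j + u * (β₁ i j - β₂ i j))))) := by
        refine Finset.sum_congr rfl fun j _ => ?_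
        by_cases hq : 0 < p i j
        · simp [hq]
        · obtain ⟨hb1, hb2⟩ := hzero i j hq
          simp [hq, hb1, hb2]
      rw [hcongr]
      exact hrow
  -- rewrite Ff in terms of φ
  have hFf : ∀ u : ℝ, 0 ≤ u → u ≤ 1 → Ff γ p (u • β₁ + (1 - u) • β₂) = φ u := by
    intro u hu0 hu1
    rw [hφ]
    simp only [Ff]
    refine Finset.sum_congr rfl fun i _ => Finset.sum_congr rfl fun j _ => ?_
    have hentry : (u • β₁ + (1 - u) • β₂) i j = β₂ i j + u * (β₁ i j - β₂ i j) := by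
      simp only [Matrix.add_apply, Matrix.smul_apply, smul_eq_mul]; ring
    rw [hentry]
    by_cases hq : 0 < p i j
    · simp only [if_pos hq]
      have hX : 0 ≤ β₂ i j + u * (β₁ i j - β₂ i j) := by
        nlinarith [mul_nonneg (by linarith : (0:ℝ) ≤ 1 - u) (h20 i j),
          mul_nonneg hu0 (h10 i j)]
      rw [entry_rewrite hX hq]
    · simp only [if_neg hq]
  have e1 : Ff γ p β₁ = φ 1 := by
    rw [← hFf 1 zero_le_one le_rfl]
    congr 1
    simp
  have e2 : Ff γ p β₂ = φ 0 := by
    rw [← hFf 0 le_rfl zero_le_one]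
    congr 1
    simp
  have hmain : φ (t • (1:ℝ) + (1 - t) • (0:ℝ)) ≤ t • φ 1 + (1 - t) • φ 0 :=
    hconv.2 (Set.mem_Icc.2 ⟨zero_le_one, le_rfl⟩)
      (Set.mem_Icc.2 ⟨le_rfl, zero_le_one⟩) ht0 (by linarith) (by ring)
  simp only [smul_eq_mul, mul_one, mul_zero, add_zero] at hmain
  rw [hFf t ht0 ht1, e1, e2]
  exact hmain
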